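/- Under λI ⪯ G ⪯ ΛI, the block BFGS update satisfies ‖H⁺‖₂ ≤ (1+√κ)²‖H‖₂ + 1/λ, where κ = Λ/λ, H⁺ = DΔDᵀ + (I − DΔYᵀ)H(I − YΔDᵀ), Y = GD, Δ = (DᵀGD)⁻¹. -/

import Mathlib

open Matrix

/-- The spectral (operator 2-) norm of a square real matrix. -/
noncomputable def specNorm {d : ℕ} (A : Matrix (Fin d) (Fin d) ℝ) : ℝ :=
  ‖Matrix.toEuclideanCLM (𝕜 := ℝ) A‖

-- helper lemmas
lemma specNorm_nonneg {d : ℕ} (A : Matrix (Fin d) (Fin d) ℝ) : 0 ≤ specNorm A :=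
  norm_nonneg _

lemma specNorm_mul_le {d : ℕ} (A B : Matrix (Fin d) (Fin d) ℝ) :
    specNorm (A * B) ≤ specNorm A * specNorm B := by
  unfold specNorm; rw [_root_.map_mul]; exact norm_mul_le _ _

lemma specNorm_add_le {d : ℕ} (A B : Matrix (Fin d) (Fin d) ℝ) :
    specNorm (A + B) ≤ specNorm A + specNorm B := by
  unfold specNorm; rw [_root_.map_add]; exact norm_add_le _ _

lemma specNorm_mul3_le {d : ℕ} (A B C : Matrix (Fin d) (Fin d) ℝ) :
    specNorm (A * B * C) ≤ specNorm A * specNorm B * specNorm C :=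
  le_trans (specNorm_mul_le _ _) (mul_le_mul_of_nonneg_right (specNorm_mul_le _ _)
    (specNorm_nonneg _))

lemma euclid_norm_sq {d : ℕ} (z : EuclideanSpace ℝ (Fin d)) :
    ‖z‖ ^ 2 = (WithLp.equiv 2 _ z) ⬝ᵥ (WithLp.equiv 2 _ z) := by
  rw [EuclideanSpace.norm_eq, Real.sq_sqrt (by positivity)]
  simp [dotProduct, Real.norm_eq_abs, sq_abs, pow_two]

lemma mulVec_dot {d : ℕ} (A : Matrix (Fin d) (Fin d) ℝ) (x : Fin d → ℝ) :
    (A *ᵥ x) ⬝ᵥ (A *ᵥ x) = x ⬝ᵥ ((Aᵀ * A) *ᵥ x) := by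
  conv_rhs => rw [← Matrix.mulVec_mulVec, Matrix.dotProduct_mulVec, Matrix.vecMul_transpose]

lemma specNorm_opBound {d : ℕ} (A : Matrix (Fin d) (Fin d) ℝ) {c : ℝ} (hc : 0 ≤ c)
    (h : ∀ x : Fin d → ℝ, (A *ᵥ x) ⬝ᵥ (A *ᵥ x) ≤ c ^ 2 * (x ⬝ᵥ x)) : specNorm A ≤ c := by
  refine ContinuousLinearMap.opNorm_le_bound _ hc fun x => ?_
  set y := Matrix.toEuclideanCLM (𝕜 := ℝ) A x with hy
  have hyv : (WithLp.equiv 2 _) y = A *ᵥ ((WithLp.equiv 2 _) x) := by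
    rw [hy]; rfl
  have key : ‖y‖ ^ 2 ≤ (c * ‖x‖) ^ 2 := by
    rw [euclid_norm_sq y, hyv, mul_pow, euclid_norm_sq x]
    exact h _
  have := Real.sqrt_le_sqrt key
  rwa [Real.sqrt_sq (norm_nonneg y), Real.sqrt_sq (by positivity)] at this

/-- Under `λI ⪯ G ⪯ ΛI`, the block BFGS update satisfies
`‖H⁺‖₂ ≤ (1+√κ)²‖H‖₂ + 1/λ` with `κ = Λ/λ`, where
`H⁺ = DΔDᵀ + (I − DΔYᵀ)H(I − YΔDᵀ)`, `Y = GD`, `Δ = (DᵀGD)⁻¹`. -/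
theorem block_bfgs_norm_bound {d q : ℕ} (lam Lam : ℝ) (hlam : 0 < lam) (hll : lam ≤ Lam)
    (H : Matrix (Fin d) (Fin d) ℝ) (hH : H.PosDef)
    (G : Matrix (Fin d) (Fin d) ℝ) (hGsym : G.IsSymm)
    (hlo : (G - lam • (1 : Matrix (Fin d) (Fin d) ℝ)).PosSemidef)
    (hhi : ((Lam • (1 : Matrix (Fin d) (Fin d) ℝ)) - G).PosSemidef)
    (D : Matrix (Fin d) (Fin q) ℝ) (hD : D.rank = q) :
    let Y := G * D
    let Δ := (Dᵀ * G * D)⁻¹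
    specNorm (D * Δ * Dᵀ + (1 - D * Δ * Yᵀ) * H * (1 - Y * Δ * Dᵀ)) ≤
      (1 + Real.sqrt (Lam / lam)) ^ 2 * specNorm H + 1 / lam := by
  intro Y Δ
  have hGT : Gᵀ = G := hGsym
  -- positivity of quadratic forms from hlo / hhi
  have hloq : ∀ x : Fin d → ℝ, lam * (x ⬝ᵥ x) ≤ x ⬝ᵥ (G *ᵥ x) := by
    intro x
    have h0 := hlo.dotProduct_mulVec_nonneg x
    simp only [star_trivial, Matrix.sub_mulVec, Matrix.smul_mulVec, Matrix.one_mulVec,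
      dotProduct_sub, dotProduct_smul, smul_eq_mul] at h0
    linarith
  have hhiq : ∀ x : Fin d → ℝ, x ⬝ᵥ (G *ᵥ x) ≤ Lam * (x ⬝ᵥ x) := by
    intro x
    have h0 := hhi.dotProduct_mulVec_nonneg x
    simp only [star_trivial, Matrix.sub_mulVec, Matrix.smul_mulVec, Matrix.one_mulVec,
      dotProduct_sub, dotProduct_smul, smul_eq_mul] at h0
    linarith
  -- G is positive definite
  have hGherm : G.IsHermitian := by
    rw [Matrix.IsHermitian, Matrix.conjTranspose_eq_transpose_of_trivial]; exact hGT
  have hGpd : G.PosDef := by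
    refine Matrix.PosDef.of_dotProduct_mulVec_pos hGherm fun x hx => ?_
    have h1 := hloq x
    have h2 : 0 < x ⬝ᵥ x := by
      have := Matrix.dotProduct_self_star_pos_iff (v := x)
      simpa [star_trivial] using this.mpr hx
    simp only [star_trivial]
    nlinarith
  -- injectivity of D
  have hDinj : ∀ x : Fin q → ℝ, D *ᵥ x = 0 → x = 0 := by
    intro x hx
    have hrn := LinearMap.finrank_range_add_finrank_ker (Matrix.mulVecLin D)
    have hfr : Module.finrank ℝ (Fin q → ℝ) = q := by simp
    have hrk : Module.finrank ℝ (LinearMap.range (Matrix.mulVecLin D)) = q := hD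
    have hker : Module.finrank ℝ (LinearMap.ker (Matrix.mulVecLin D)) = 0 := by omega
    have hbot : LinearMap.ker (Matrix.mulVecLin D) = ⊥ := Submodule.finrank_eq_zero.mp hker
    have hmem : x ∈ LinearMap.ker (Matrix.mulVecLin D) := by
      rw [LinearMap.mem_ker, Matrix.mulVecLin_apply]; exact hx
    rw [hbot, Submodule.mem_bot] at hmem
    exact hmem
  -- DᵀGD is positive definite
  have hMherm : (Dᵀ * G * D).IsHermitian := by
    rw [Matrix.IsHermitian, Matrix.conjTranspose_eq_transpose_of_trivial]
    simp only [Matrix.transpose_mul, Matrix.transpose_transpose, hGT, Matrix.mul_assoc]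
  have hMpd : (Dᵀ * G * D).PosDef := by
    refine Matrix.PosDef.of_dotProduct_mulVec_pos hMherm fun x hx => ?_
    have hDx : D *ᵥ x ≠ 0 := fun h => hx (hDinj x h)
    have := hGpd.dotProduct_mulVec_pos hDx
    simp only [star_trivial] at this ⊢
    rw [← Matrix.mulVec_mulVec, ← Matrix.mulVec_mulVec, Matrix.dotProduct_mulVec,
      Matrix.vecMul_transpose]
    exact this
  have hMdet : IsUnit (Dᵀ * G * D).det := (Matrix.isUnit_iff_isUnit_det _).mp hMpd.isUnit
  have hMΔ : (Dᵀ * G * D) * Δ = 1 := Matrix.mul_nonsing_inv _ hMdet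
  have hΔM : Δ * (Dᵀ * G * D) = 1 := Matrix.nonsing_inv_mul _ hMdet
  have hMT : (Dᵀ * G * D)ᵀ = Dᵀ * G * D := by
    simp only [Matrix.transpose_mul, Matrix.transpose_transpose, hGT, Matrix.mul_assoc]
  have hΔT : Δᵀ = Δ := by
    show (Dᵀ * G * D)⁻¹ᵀ = (Dᵀ * G * D)⁻¹
    rw [Matrix.transpose_nonsing_inv, hMT]
  -- square root of G
  have hGpsd : G.PosSemidef := hGpd.posSemidef
  set R := (open scoped MatrixOrder in CFC.sqrt G) with hRdef
  have hRR : R * R = G := by open scoped MatrixOrder in exact CFC.sqrt_mul_sqrt_self G hGpsd.nonneg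
  have hRpsd : R.PosSemidef := by open scoped MatrixOrder in exact (CFC.sqrt_nonneg G).posSemidef
  have hRT : Rᵀ = R := by
    have := hRpsd.isHermitian
    rwa [Matrix.IsHermitian, Matrix.conjTranspose_eq_transpose_of_trivial] at this
  have hGdet : IsUnit G.det := (Matrix.isUnit_iff_isUnit_det _).mp hGpd.isUnit
  have hRunit : IsUnit R := by
    have hinv : Invertible R := invertibleOfRightInverse _ (R * G⁻¹) (by
      rw [← Matrix.mul_assoc, hRR, Matrix.mul_nonsing_inv _ hGdet])
    exact isUnit_of_invertible R
  have hRdet : IsUnit R.det := (Matrix.isUnit_iff_isUnit_det _).mp hRunit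
  have hRRi : R * R⁻¹ = 1 := Matrix.mul_nonsing_inv _ hRdet
  have hRiR : R⁻¹ * R = 1 := Matrix.nonsing_inv_mul _ hRdet
  -- the projector Q
  set Q := R * (D * Δ * Dᵀ) * R with hQdef
  have hPGP : (D * Δ * Dᵀ) * G * (D * Δ * Dᵀ) = D * Δ * Dᵀ := by
    have h1 : (D * Δ * Dᵀ) * G * (D * Δ * Dᵀ) = D * (Δ * ((Dᵀ * G * D) * (Δ * Dᵀ))) := by
      simp only [Matrix.mul_assoc]
    rw [h1, ← Matrix.mul_assoc (Dᵀ * G * D) Δ Dᵀ, hMΔ, Matrix.one_mul]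
    simp only [Matrix.mul_assoc]
  have hQQ : Q * Q = Q := by
    rw [hQdef]
    rw [show R * (D * Δ * Dᵀ) * R * (R * (D * Δ * Dᵀ) * R)
        = R * ((D * Δ * Dᵀ) * (R * R) * (D * Δ * Dᵀ)) * R by simp only [Matrix.mul_assoc],
      hRR, hPGP]
  have hQT : Qᵀ = Q := by
    rw [hQdef]
    simp only [Matrix.transpose_mul, Matrix.transpose_transpose, hRT, hΔT, Matrix.mul_assoc]
  have hQpsd : Q.PosSemidef := by
    have := Matrix.posSemidef_conjTranspose_mul_self Q
    rwa [Matrix.conjTranspose_eq_transpose_of_trivial, hQT, hQQ] at this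
  have h1QQ : (1 - Q) * (1 - Q) = 1 - Q := by
    simp only [Matrix.mul_sub, Matrix.sub_mul, Matrix.one_mul, Matrix.mul_one, hQQ]
    abel
  have h1QT : (1 - Q)ᵀ = 1 - Q := by
    rw [Matrix.transpose_sub, Matrix.transpose_one, hQT]
  have h1Qpsd : (1 - Q).PosSemidef := by
    have := Matrix.posSemidef_conjTranspose_mul_self (1 - Q)
    rwa [Matrix.conjTranspose_eq_transpose_of_trivial, h1QT, h1QQ] at this
  -- norm bounds
  have hQnorm : specNorm Q ≤ 1 := by
    refine specNorm_opBound _ zero_le_one fun x => ?_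
    rw [mulVec_dot, hQT, hQQ, one_pow, one_mul]
    have h0 := h1Qpsd.dotProduct_mulVec_nonneg x
    simp only [star_trivial, Matrix.sub_mulVec, Matrix.one_mulVec, dotProduct_sub] at h0
    linarith
  have h1Qnorm : specNorm (1 - Q) ≤ 1 := by
    refine specNorm_opBound _ zero_le_one fun x => ?_
    rw [mulVec_dot, h1QT, h1QQ, one_pow, one_mul]
    have h0 := hQpsd.dotProduct_mulVec_nonneg x
    simp only [star_trivial] at h0
    simp only [Matrix.sub_mulVec, Matrix.one_mulVec, dotProduct_sub]
    linarith
  have hLam0 : (0:ℝ) ≤ Lam := le_trans hlam.le hll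
  have hRnorm : specNorm R ≤ Real.sqrt Lam := by
    refine specNorm_opBound _ (Real.sqrt_nonneg _) fun x => ?_
    rw [mulVec_dot, hRT, hRR, Real.sq_sqrt hLam0]
    exact hhiq x
  have hRinorm : specNorm R⁻¹ ≤ 1 / Real.sqrt lam := by
    refine specNorm_opBound _ (by positivity) fun x => ?_
    rw [div_pow, one_pow, Real.sq_sqrt hlam.le]
    set y := R⁻¹ *ᵥ x with hy
    have hx : R *ᵥ y = x := by rw [hy, Matrix.mulVec_mulVec, hRRi, Matrix.one_mulVec]
    have h1 : x ⬝ᵥ x = y ⬝ᵥ (G *ᵥ y) := by rw [← hx, mulVec_dot, hRT, hRR]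
    have h2 := hloq y
    rw [h1]
    calc y ⬝ᵥ y = (1 / lam) * (lam * (y ⬝ᵥ y)) := by field_simp
      _ ≤ (1 / lam) * (y ⬝ᵥ (G *ᵥ y)) := by
          apply mul_le_mul_of_nonneg_left h2; positivity
  -- the three structural identities
  have hI1 : D * Δ * Dᵀ = R⁻¹ * Q * R⁻¹ := by
    rw [hQdef,
      show R⁻¹ * (R * (D * Δ * Dᵀ) * R) * R⁻¹ = (R⁻¹ * R) * (D * Δ * Dᵀ) * (R * R⁻¹) by
        simp only [Matrix.mul_assoc],
      hRiR, hRRi, Matrix.one_mul, Matrix.mul_one]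
  have hYT : Yᵀ = Dᵀ * G := by
    show (G * D)ᵀ = Dᵀ * G
    rw [Matrix.transpose_mul, hGT]
  have hI2 : 1 - D * Δ * Yᵀ = R⁻¹ * (1 - Q) * R := by
    rw [Matrix.mul_sub, Matrix.sub_mul, Matrix.mul_one, hRiR]
    congr 1
    rw [hQdef,
      show R⁻¹ * (R * (D * Δ * Dᵀ) * R) * R = (R⁻¹ * R) * (D * Δ * Dᵀ) * (R * R) by
        simp only [Matrix.mul_assoc],
      hRiR, hRR, Matrix.one_mul, hYT]
    simp only [Matrix.mul_assoc]
  have hI3 : 1 - Y * Δ * Dᵀ = R * (1 - Q) * R⁻¹ := by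
    rw [Matrix.mul_sub, Matrix.sub_mul, Matrix.mul_one, hRRi]
    congr 1
    rw [hQdef,
      show R * (R * (D * Δ * Dᵀ) * R) * R⁻¹ = (R * R) * (D * Δ * Dᵀ) * (R * R⁻¹) by
        simp only [Matrix.mul_assoc],
      hRR, hRRi, Matrix.mul_one,
      show Y * Δ * Dᵀ = G * (D * Δ * Dᵀ) by show G * D * Δ * Dᵀ = _; simp only [Matrix.mul_assoc],
      ← Matrix.mul_assoc]
  -- assemble
  have hslam : (0:ℝ) < Real.sqrt lam := Real.sqrt_pos.mpr hlam
  have t1 : specNorm (D * Δ * Dᵀ) ≤ 1 / lam := by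
    rw [hI1]
    calc specNorm (R⁻¹ * Q * R⁻¹) ≤ specNorm R⁻¹ * specNorm Q * specNorm R⁻¹ :=
          specNorm_mul3_le _ _ _
      _ ≤ (1 / Real.sqrt lam) * 1 * (1 / Real.sqrt lam) := by
          apply mul_le_mul _ hRinorm (specNorm_nonneg _) (by positivity)
          exact mul_le_mul hRinorm hQnorm (specNorm_nonneg _) (by positivity)
      _ = 1 / lam := by
          rw [mul_one, div_mul_div_comm, one_mul, Real.mul_self_sqrt hlam.le]
  have hA2 : specNorm (R⁻¹ * (1 - Q) * R) ≤ (1 / Real.sqrt lam) * Real.sqrt Lam := by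
    calc specNorm (R⁻¹ * (1 - Q) * R) ≤ specNorm R⁻¹ * specNorm (1 - Q) * specNorm R :=
          specNorm_mul3_le _ _ _
      _ ≤ ((1 / Real.sqrt lam) * 1) * Real.sqrt Lam := by
          apply mul_le_mul _ hRnorm (specNorm_nonneg _) (by positivity)
          exact mul_le_mul hRinorm h1Qnorm (specNorm_nonneg _) (by positivity)
      _ = (1 / Real.sqrt lam) * Real.sqrt Lam := by rw [mul_one]
  have hB2 : specNorm (R * (1 - Q) * R⁻¹) ≤ Real.sqrt Lam * (1 / Real.sqrt lam) := by
    calc specNorm (R * (1 - Q) * R⁻¹) ≤ specNorm R * specNorm (1 - Q) * specNorm R⁻¹ :=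
          specNorm_mul3_le _ _ _
      _ ≤ (Real.sqrt Lam * 1) * (1 / Real.sqrt lam) := by
          apply mul_le_mul _ hRinorm (specNorm_nonneg _) (by positivity)
          exact mul_le_mul hRnorm h1Qnorm (specNorm_nonneg _) (by positivity)
      _ = Real.sqrt Lam * (1 / Real.sqrt lam) := by rw [mul_one]
  have t2 : specNorm ((1 - D * Δ * Yᵀ) * H * (1 - Y * Δ * Dᵀ)) ≤ (Lam / lam) * specNorm H := by
    rw [hI2, hI3]
    calc specNorm ((R⁻¹ * (1 - Q) * R) * H * (R * (1 - Q) * R⁻¹))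
        ≤ specNorm (R⁻¹ * (1 - Q) * R) * specNorm H * specNorm (R * (1 - Q) * R⁻¹) :=
          specNorm_mul3_le _ _ _
      _ ≤ ((1 / Real.sqrt lam) * Real.sqrt Lam) * specNorm H
            * (Real.sqrt Lam * (1 / Real.sqrt lam)) := by
          apply mul_le_mul _ hB2 (specNorm_nonneg _)
            (mul_nonneg (by positivity) (specNorm_nonneg _))
          exact mul_le_mul hA2 le_rfl (specNorm_nonneg _) (by positivity)
      _ = (Lam / lam) * specNorm H := by
          rw [show ((1 / Real.sqrt lam) * Real.sqrt Lam) * specNorm H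
              * (Real.sqrt Lam * (1 / Real.sqrt lam))
              = ((Real.sqrt Lam * Real.sqrt Lam) / (Real.sqrt lam * Real.sqrt lam))
                * specNorm H by ring,
            Real.mul_self_sqrt hLam0, Real.mul_self_sqrt hlam.le]
  have hsum := specNorm_add_le (D * Δ * Dᵀ) ((1 - D * Δ * Yᵀ) * H * (1 - Y * Δ * Dᵀ))
  have hsq : Real.sqrt (Lam / lam) ^ 2 = Lam / lam := Real.sq_sqrt (by positivity)
  have hHn : 0 ≤ specNorm H := specNorm_nonneg _
  nlinarith [Real.sqrt_nonneg (Lam / lam),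
    mul_nonneg hHn (Real.sqrt_nonneg (Lam / lam))]
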